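/- For every odd n ≥ 3, there exists a unitary U ∈ U(ℂ^n ⊗ ℂ^n) with operator Schmidt rank Ω(U) = n + 1. -/

import Mathlib

open Matrix Kronecker

/-- The realignment (reshuffling) of a bipartite operator. -/
def realign {n m : ℕ} (X : Matrix (Fin n × Fin m) (Fin n × Fin m) ℂ) :
    Matrix (Fin n × Fin n) (Fin m × Fin m) ℂ :=
  Matrix.of fun p q => X (p.1, q.1) (p.2, q.2)

/-- The operator Schmidt rank of a bipartite operator, i.e. the rank
of its realignment. -/
noncomputable def osr {n m : ℕ} (X : Matrix (Fin n × Fin m) (Fin n × Fin m) ℂ) : ℕ :=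
  (realign X).rank

namespace Stmt14Aux

def permA {n : ℕ} [NeZero n] (f : Fin n → Fin n) : Equiv.Perm (Fin n × Fin n) where
  toFun p := (p.1, p.2 + f p.1)
  invFun p := (p.1, p.2 - f p.1)
  left_inv p := by simp
  right_inv p := by simp

def permB {n : ℕ} [NeZero n] (f : Fin n → Fin n) : Equiv.Perm (Fin n × Fin n) where
  toFun p := (p.1 + f p.2, p.2)
  invFun p := (p.1 - f p.2, p.2)
  left_inv p := by simp
  right_inv p := by simp

def permMat {n : ℕ} (σ : Equiv.Perm (Fin n × Fin n)) :
    Matrix (Fin n × Fin n) (Fin n × Fin n) ℂ :=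
  Matrix.of fun p q => if p = σ q then 1 else 0

theorem permMat_mem {n : ℕ} (σ : Equiv.Perm (Fin n × Fin n)) :
    permMat σ ∈ Matrix.unitaryGroup (Fin n × Fin n) ℂ := by
  rw [Matrix.mem_unitaryGroup_iff]
  ext p q
  simp only [Matrix.mul_apply, Matrix.star_apply, permMat, Matrix.of_apply, Matrix.one_apply]
  have h : ∀ r, (if p = σ r then (1:ℂ) else 0) * star (if q = σ r then (1:ℂ) else 0)
      = if r = σ.symm p then (if p = q then 1 else 0) else 0 := by
    intro r
    by_cases hr : r = σ.symm p
    · subst hr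
      simp only [Equiv.apply_symm_apply, if_pos rfl, one_mul]
      by_cases hpq : p = q
      · simp [hpq]
      · simp [hpq, Ne.symm hpq]
    · have h1 : p ≠ σ r := by
        intro h'; exact hr (by simp [h'])
      simp [h1, hr]
  rw [Finset.sum_congr rfl fun r _ => h r]
  simp

/-- the candidate column vectors -/
def wv {n : ℕ} [NeZero n] (k : ℕ) (u v : Fin n) : Fin n × Fin n → ℂ :=
  fun p => if p.2.1 % k = v.1 ∧ p.1 = p.2 + u then 1 else 0

end Stmt14Aux

/-- For every odd `n ≥ 3` there is a unitary on `ℂ^n ⊗ ℂ^n` with operator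
Schmidt rank `n + 1`. -/
theorem stmt14 (n : ℕ) (hodd : Odd n) (hn : 3 ≤ n) :
    ∃ U ∈ Matrix.unitaryGroup (Fin n × Fin n) ℂ, osr U = n + 1 := by
  obtain ⟨m, hm⟩ := hodd
  haveI : NeZero n := ⟨by omega⟩
  set k := m + 1 with hkdef
  have hkn : k ≤ n := by omega
  have h2n : 2 ≤ n := by omega
  have hk0 : 0 < k := by omega
  -- the two shift functions
  set t : Fin n → Fin n := fun c => ⟨c.1 % k, lt_of_lt_of_le (Nat.mod_lt _ hk0) hkn⟩ with ht
  set s : Fin n → Fin n :=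
    fun b => ⟨b.1 % 2, lt_of_lt_of_le (Nat.mod_lt _ (by omega)) h2n⟩ with hs
  set σ : Equiv.Perm (Fin n × Fin n) := (Stmt14Aux.permA t).trans (Stmt14Aux.permB s) with hσdef
  refine ⟨Stmt14Aux.permMat σ, Stmt14Aux.permMat_mem σ, ?_⟩
  set M := realign (Stmt14Aux.permMat σ) with hM
  -- column description
  have hσ : ∀ c d : Fin n, σ (c, d) = (c + s (d + t c), d + t c) := fun c d => rfl
  have hcol : ∀ b d : Fin n, Mᵀ (b, d) = Stmt14Aux.wv k (s b) (b - d) := by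
    intro b d
    funext p
    obtain ⟨a, c⟩ := p
    show M (a, c) (b, d) = _
    have : M (a, c) (b, d) = if (a, b) = σ (c, d) then 1 else 0 := rfl
    rw [this, hσ]
    have hiff : ((a, b) = (c + s (d + t c), d + t c)) ↔ (c.1 % k = (b - d).1 ∧ a = c + s b) := by
      rw [Prod.mk.injEq]
      constructor
      · rintro ⟨h1, h2⟩
        have h3 : t c = b - d := by rw [h2]; exact (add_sub_cancel_left d (t c)).symm
        refine ⟨by rw [← h3], ?_⟩
        rw [h1, ← h2]
      · rintro ⟨h1, h2⟩
        have h3 : t c = b - d := Fin.ext h1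
        have hb : d + t c = b := by rw [h3]; abel
        exact ⟨by rw [hb, ← h2], hb.symm⟩
    rw [Stmt14Aux.wv]
    simp only [hiff]
  -- the independent family
  set w : Fin 2 × Fin k → (Fin n × Fin n → ℂ) :=
    fun i => Stmt14Aux.wv k (Fin.castLE h2n i.1) (Fin.castLE hkn i.2) with hw
  -- every column is in the span of w
  have hsub1 : Set.range Mᵀ ⊆ ↑(Submodule.span ℂ (Set.range w)) := by
    rintro _ ⟨⟨b, d⟩, rfl⟩
    rw [hcol]
    by_cases hbd : (b - d).1 < k
    · have : Stmt14Aux.wv k (s b) (b - d) = w (⟨b.1 % 2, by omega⟩, ⟨(b - d).1, hbd⟩) := by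
        rw [hw]
        congr 1
      rw [this]
      exact Submodule.subset_span ⟨_, rfl⟩
    · have : Stmt14Aux.wv k (s b) (b - d) = 0 := by
        funext p
        rw [Stmt14Aux.wv]
        have : ¬(p.2.1 % k = (b - d).1) := by
          have := Nat.mod_lt p.2.1 hk0
          omega
        simp [this]
      rw [this]
      exact Submodule.zero_mem _
  -- every w i is a column
  have hsub2 : Set.range w ⊆ ↑(Submodule.span ℂ (Set.range Mᵀ)) := by
    rintro _ ⟨i, rfl⟩
    obtain ⟨e, β⟩ := i
    set b : Fin n := Fin.castLE h2n e with hb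
    set d : Fin n := b - Fin.castLE hkn β with hd
    have h1 : s b = Fin.castLE h2n e := by
      apply Fin.ext
      show b.1 % 2 = e.1
      rw [hb]
      exact Nat.mod_eq_of_lt e.2
    have h2 : b - d = Fin.castLE hkn β := by rw [hd]; abel
    have : w (e, β) = Mᵀ (b, d) := by
      rw [hcol, h1, h2]
    rw [this]
    exact Submodule.subset_span ⟨_, rfl⟩
  -- w is linearly independent
  have hli : LinearIndependent ℂ w := by
    rw [Fintype.linearIndependent_iff]
    intro g hg i
    have := congrFun hg (Fin.castLE hkn i.2 + Fin.castLE h2n i.1, Fin.castLE hkn i.2)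
    rw [Finset.sum_apply] at this
    simp only [Pi.smul_apply, smul_eq_mul, Pi.zero_apply] at this
    have hterm : ∀ j : Fin 2 × Fin k,
        w j (Fin.castLE hkn i.2 + Fin.castLE h2n i.1, Fin.castLE hkn i.2)
          = if j = i then 1 else 0 := by
      intro j
      rw [hw]
      show (if (Fin.castLE hkn i.2).1 % k = (Fin.castLE hkn j.2).1 ∧
          Fin.castLE hkn i.2 + Fin.castLE h2n i.1
            = Fin.castLE hkn i.2 + Fin.castLE h2n j.1 then (1:ℂ) else 0) = _
      have hc : ((Fin.castLE hkn i.2).1 % k = (Fin.castLE hkn j.2).1 ∧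
          Fin.castLE hkn i.2 + Fin.castLE h2n i.1
            = Fin.castLE hkn i.2 + Fin.castLE h2n j.1) ↔ j = i := by
        constructor
        · rintro ⟨c1, c2⟩
          have hβ : j.2 = i.2 := by
            apply Fin.ext
            have : i.2.1 % k = i.2.1 := Nat.mod_eq_of_lt i.2.2
            simp only [Fin.coe_castLE] at c1
            omega
          have he : j.1 = i.1 := by
            have := add_left_cancel c2
            apply Fin.ext
            have h' := congrArg Fin.val this
            simpa using h'.symm
          exact Prod.ext he hβ
        · rintro rfl
          exact ⟨Nat.mod_eq_of_lt j.2.2, rfl⟩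
      simp only [hc]
    rw [Finset.sum_congr rfl fun j _ => by rw [hterm j]] at this
    simpa using this
  -- conclude
  have hspan : Submodule.span ℂ (Set.range Mᵀ) = Submodule.span ℂ (Set.range w) :=
    le_antisymm (Submodule.span_le.2 hsub1) (Submodule.span_le.2 hsub2)
  show M.rank = n + 1
  rw [Matrix.rank_eq_finrank_span_cols]
  change Module.finrank ℂ (Submodule.span ℂ (Set.range Mᵀ)) = n + 1
  rw [hspan, finrank_span_eq_card hli]
  simp only [Fintype.card_prod, Fintype.card_fin]
  omega
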